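/- Weak (1,1) bound for positive dyadic operators of complexity k: if S is a (1/2)-sparse collection of dyadic cubes, then the operator A_k f := ∑_{S ∈ S} ⟨|f|⟩_{S^{(k)}} 1_S satisfies ‖A_k f‖_{L^{1,∞}(μ)} ≤ C ‖f‖_{L¹(μ)} with C an absolute constant independent of k and μ, provided μ gives infinite measure to each d-dimensional quadrant. -/

import Mathlib

open MeasureTheory Set ENNReal NNReal

noncomputable section

/-- A dyadic cube in `ℝ^d`: side length `2^n`, lower-left corner `m * 2^n`. -/
structure DyadicCube (d : ℕ) where
  n : ℤ
  m : Fin d → ℤ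

namespace DyadicCube

/-- The underlying set of a dyadic cube. -/
def toSet {d : ℕ} (Q : DyadicCube d) : Set (Fin d → ℝ) :=
  {x | ∀ i, (Q.m i : ℝ) * 2 ^ Q.n ≤ x i ∧ x i < ((Q.m i : ℝ) + 1) * 2 ^ Q.n}

/-- The dyadic parent of a dyadic cube. -/
def parent {d : ℕ} (Q : DyadicCube d) : DyadicCube d :=
  ⟨Q.n + 1, fun i => Int.fdiv (Q.m i) 2⟩

/-- The `k`-th dyadic ancestor of a dyadic cube. -/
def ancestor {d : ℕ} (k : ℕ) (Q : DyadicCube d) : DyadicCube d :=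
  parent^[k] Q

end DyadicCube

/-- `m` is a median of `f` on `Q` (w.r.t. `μ`). -/
def IsMedian {d : ℕ} (μ : Measure (Fin d → ℝ)) (f : (Fin d → ℝ) → ℝ)
    (Q : Set (Fin d → ℝ)) (m : ℝ) : Prop :=
  μ (Q ∩ {x | m < f x}) ≤ μ Q / 2 ∧ μ (Q ∩ {x | f x < m}) ≤ μ Q / 2

/-- The relative median oscillation `r_λ(f; Q)` of `f` about zero on `Q`. -/
def rOsc {d : ℕ} (μ : Measure (Fin d → ℝ)) (lam : ℝ) (f : (Fin d → ℝ) → ℝ)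
    (Q : Set (Fin d → ℝ)) : ℝ :=
  sInf {r : ℝ | 0 ≤ r ∧ μ (Q ∩ {x | r < |f x|}) ≤ ENNReal.ofReal lam * μ Q}

/-- The median oscillation `ω_λ(f; Q)`. -/
def mOsc {d : ℕ} (μ : Measure (Fin d → ℝ)) (lam : ℝ) (f : (Fin d → ℝ) → ℝ)
    (Q : Set (Fin d → ℝ)) : ℝ :=
  ⨅ c : ℝ, rOsc μ lam (fun x => f x - c) Q

/-- The average `⟨f⟩_Q = (1/μ(Q)) ∫_Q f dμ`. -/
def avg {d : ℕ} (μ : Measure (Fin d → ℝ)) (f : (Fin d → ℝ) → ℝ)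
    (Q : Set (Fin d → ℝ)) : ℝ :=
  (∫ x in Q, f x ∂μ) / (μ Q).toReal

/-- The `𝒮`-children of `F`: maximal members of `𝒮` strictly contained in `F`. -/
def sparseChildren {d : ℕ} (𝒮 : Set (DyadicCube d)) (F : DyadicCube d) :
    Set (DyadicCube d) :=
  {F' | F' ∈ 𝒮 ∧ F'.toSet ⊂ F.toSet ∧
    ∀ G ∈ 𝒮, G.toSet ⊂ F.toSet → F'.toSet ⊆ G.toSet → G = F'}

/-- The positive dyadic operator of complexity `k`, `A_k f = ∑_{S∈𝒮} ⟨|f|⟩_{S^{(k)}} 1_S`,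
ENNReal-valued. -/
def Aop {d : ℕ} (μ : Measure (Fin d → ℝ)) (𝒮 : Set (DyadicCube d)) (k : ℕ)
    (f : (Fin d → ℝ) → ℝ) (x : Fin d → ℝ) : ℝ≥0∞ :=
  ∑' S : 𝒮,
    ((∫⁻ y in (DyadicCube.ancestor k (S : DyadicCube d)).toSet, ‖f y‖₊ ∂μ) /
        μ (DyadicCube.ancestor k (S : DyadicCube d)).toSet) *
      (S : DyadicCube d).toSet.indicator (fun _ => (1 : ℝ≥0∞)) x

theorem Set.Finite.exists_maximal_wrt {α β : Type*} [PartialOrder β] (f : α → β) (s : Set α)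
    (h : s.Finite) (hs : s.Nonempty) : ∃ a ∈ s, ∀ a' ∈ s, f a ≤ f a' → f a = f a' := by
  obtain ⟨a, ha, hmax⟩ := h.exists_maximalFor f s hs
  exact ⟨a, ha, fun a' ha' hle => le_antisymm hle (hmax ha' hle)⟩

namespace WeakProof

open DyadicCube

variable {d : ℕ}

/-- corner point of a cube -/
noncomputable instance : DecidableEq (DyadicCube d) := Classical.decEq _

def corner (Q : DyadicCube d) : Fin d → ℝ := fun i => (Q.m i : ℝ) * 2 ^ Q.n

lemma corner_mem (Q : DyadicCube d) : corner Q ∈ Q.toSet := by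
  intro i
  have h : (0:ℝ) < 2 ^ Q.n := by positivity
  constructor
  · exact le_refl _
  · show (Q.m i : ℝ) * 2 ^ Q.n < _
    nlinarith

lemma toSet_nonempty (Q : DyadicCube d) : Q.toSet.Nonempty := ⟨corner Q, corner_mem Q⟩

lemma measurableSet_toSet (Q : DyadicCube d) : MeasurableSet Q.toSet := by
  have : Q.toSet = ⋂ i, ((fun x : Fin d → ℝ => x i) ⁻¹' (Set.Ico ((Q.m i : ℝ) * 2 ^ Q.n) (((Q.m i : ℝ) + 1) * 2 ^ Q.n))) := by
    ext x
    simp [DyadicCube.toSet, Set.mem_iInter, Set.mem_Ico]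
  rw [this]
  exact MeasurableSet.iInter fun i => (measurable_pi_apply i) measurableSet_Ico

instance : Countable (DyadicCube d) := by
  have h : Function.Injective (fun Q : DyadicCube d => (Q.n, Q.m)) := by
    intro a b hab
    cases a; cases b
    simp_all
  exact h.countable

end WeakProof
namespace WeakProof
open DyadicCube
variable {d : ℕ}

lemma two_zpow_pos (n : ℤ) : (0:ℝ) < 2 ^ n := by positivity

/-- Core integer fact: if the dyadic intervals `[m 2^n, (m+1) 2^n)` and
`[m' 2^{n'}, (m'+1) 2^{n'})` share the point `x` and `n ≤ n'`, then
`m' * 2^(n'-n) ≤ m` and `m + 1 ≤ (m'+1) * 2^(n'-n)`. -/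
lemma key_int {n n' m m' : ℤ} (hn : n ≤ n') {x : ℝ}
    (h1 : (m:ℝ) * 2 ^ n ≤ x) (h2 : x < ((m:ℝ)+1) * 2 ^ n)
    (h3 : (m':ℝ) * 2 ^ n' ≤ x) (h4 : x < ((m':ℝ)+1) * 2 ^ n') :
    m' * 2 ^ (n' - n).toNat ≤ m ∧ m + 1 ≤ (m' + 1) * 2 ^ (n' - n).toNat := by
  have hc : ((n' - n).toNat : ℤ) = n' - n := Int.toNat_of_nonneg (by omega)
  have hsplit : (2:ℝ) ^ n' = (2:ℝ) ^ ((n' - n).toNat) * 2 ^ n := by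
    rw [← zpow_natCast (2:ℝ) (n' - n).toNat, hc, ← zpow_add₀ (by norm_num : (2:ℝ) ≠ 0)]
    ring_nf
  have hpos : (0:ℝ) < 2 ^ n := two_zpow_pos n
  constructor
  · -- m' * 2^c < m + 1
    have hr : ((m':ℝ) * 2 ^ ((n' - n).toNat)) * 2 ^ n < ((m:ℝ) + 1) * 2 ^ n := by
      calc ((m':ℝ) * 2 ^ ((n' - n).toNat)) * 2 ^ n = (m':ℝ) * 2 ^ n' := by
            rw [hsplit]; ring
        _ ≤ x := h3
        _ < _ := h2
    have := lt_of_mul_lt_mul_right hr hpos.le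
    have : (m' * 2 ^ (n' - n).toNat : ℤ) < m + 1 := by exact_mod_cast (by push_cast; linarith : ((m' * 2 ^ (n' - n).toNat : ℤ) : ℝ) < ((m + 1 : ℤ) : ℝ))
    omega
  · have hr : ((m:ℝ)) * 2 ^ n < (((m':ℝ) + 1) * 2 ^ ((n' - n).toNat)) * 2 ^ n := by
      calc ((m:ℝ)) * 2 ^ n ≤ x := h1
        _ < ((m':ℝ)+1) * 2 ^ n' := h4
        _ = (((m':ℝ) + 1) * 2 ^ ((n' - n).toNat)) * 2 ^ n := by rw [hsplit]; ring
    have := lt_of_mul_lt_mul_right hr hpos.le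
    have : (m : ℤ) < (m' + 1) * 2 ^ (n' - n).toNat := by exact_mod_cast (by push_cast; linarith : ((m : ℤ) : ℝ) < (((m' + 1) * 2 ^ (n' - n).toNat : ℤ) : ℝ))
    omega

/-- If two dyadic cubes share a point and `Q.n ≤ Q'.n` then `Q ⊆ Q'`. -/
lemma toSet_subset_of_le {Q Q' : DyadicCube d}
    (hx : (Q.toSet ∩ Q'.toSet).Nonempty) (hn : Q.n ≤ Q'.n) :
    Q.toSet ⊆ Q'.toSet := by
  obtain ⟨x, hxQ, hxQ'⟩ := hx
  intro y hy i
  obtain ⟨A, B⟩ := key_int hn (hxQ i).1 (hxQ i).2 (hxQ' i).1 (hxQ' i).2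
  have hpos : (0:ℝ) < 2 ^ Q.n := two_zpow_pos Q.n
  have hsplit : (2:ℝ) ^ Q'.n = (2:ℝ) ^ ((Q'.n - Q.n).toNat) * 2 ^ Q.n := by
    rw [← zpow_natCast (2:ℝ) (Q'.n - Q.n).toNat, Int.toNat_of_nonneg (by omega),
      ← zpow_add₀ (by norm_num : (2:ℝ) ≠ 0)]
    ring_nf
  have hA : ((Q'.m i : ℝ)) * 2 ^ Q'.n ≤ (Q.m i : ℝ) * 2 ^ Q.n := by
    rw [hsplit]
    have : ((Q'.m i : ℝ)) * 2 ^ ((Q'.n - Q.n).toNat) ≤ (Q.m i : ℝ) := by exact_mod_cast A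
    calc ((Q'.m i : ℝ)) * ((2:ℝ) ^ ((Q'.n - Q.n).toNat) * 2 ^ Q.n)
        = (((Q'.m i : ℝ)) * 2 ^ ((Q'.n - Q.n).toNat)) * 2 ^ Q.n := by ring
      _ ≤ (Q.m i : ℝ) * 2 ^ Q.n := by exact mul_le_mul_of_nonneg_right this hpos.le
  have hB : ((Q.m i : ℝ) + 1) * 2 ^ Q.n ≤ ((Q'.m i : ℝ) + 1) * 2 ^ Q'.n := by
    rw [hsplit]
    have : ((Q.m i : ℝ) + 1) ≤ ((Q'.m i : ℝ) + 1) * 2 ^ ((Q'.n - Q.n).toNat) := by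
      exact_mod_cast B
    calc ((Q.m i : ℝ) + 1) * 2 ^ Q.n ≤ (((Q'.m i : ℝ) + 1) * 2 ^ ((Q'.n - Q.n).toNat)) * 2 ^ Q.n :=
          mul_le_mul_of_nonneg_right this hpos.le
      _ = ((Q'.m i : ℝ) + 1) * ((2:ℝ) ^ ((Q'.n - Q.n).toNat) * 2 ^ Q.n) := by ring
  exact ⟨le_trans hA (hy i).1, lt_of_lt_of_le (hy i).2 hB⟩

/-- Same level and subset implies equality of cubes. -/
lemma eq_of_subset_of_level_eq {Q Q' : DyadicCube d}
    (hsub : Q.toSet ⊆ Q'.toSet) (hn : Q.n = Q'.n) : Q = Q' := by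
  have hc := hsub (corner_mem Q)
  have hm : Q.m = Q'.m := by
    funext i
    have h1 := (hc i).1
    have h2 := (hc i).2
    rw [← hn] at h1 h2
    have hco : corner Q i = (Q.m i : ℝ) * 2 ^ Q.n := rfl
    rw [hco] at h1 h2
    have hpos : (0:ℝ) < 2 ^ Q.n := two_zpow_pos Q.n
    have e1 : (Q'.m i : ℝ) ≤ (Q.m i : ℝ) := by
      have := le_of_mul_le_mul_right h1 hpos
      linarith [this]
    have e2 : (Q.m i : ℝ) <  (Q'.m i : ℝ) + 1 := by
      nlinarith [h2, hpos]
    have e1' : (Q'.m i) ≤ Q.m i := by exact_mod_cast e1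
    have e2' : (Q.m i) < Q'.m i + 1 := by exact_mod_cast e2
    omega
  cases Q; cases Q'; simp_all

end WeakProof
namespace WeakProof
open DyadicCube
variable {d : ℕ}

private lemma eq_of_mutual_subset_aux (hd : 0 < d) {Q Q' : DyadicCube d}
    (h12 : Q.toSet ⊆ Q'.toSet) (h21 : Q'.toSet ⊆ Q.toSet) (hn : Q.n ≤ Q'.n) : Q = Q' := by
  set i0 : Fin d := ⟨0, hd⟩
  have hc := h12 (corner_mem Q)
  obtain ⟨A, B⟩ := key_int hn ((corner_mem Q) i0).1 ((corner_mem Q) i0).2 (hc i0).1 (hc i0).2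
  set c : ℕ := (Q'.n - Q.n).toNat with hcdef
  have hctoNat : (c : ℤ) = Q'.n - Q.n := Int.toNat_of_nonneg (by omega)
  have hcn : c = 0 → Q.n = Q'.n := by intro h; omega
  have hpos : (0:ℝ) < 2 ^ Q.n := two_zpow_pos Q.n
  have hsplit : (2:ℝ) ^ Q'.n = (2:ℝ) ^ c * 2 ^ Q.n := by
    rw [← zpow_natCast (2:ℝ) c, hctoNat, ← zpow_add₀ (by norm_num : (2:ℝ) ≠ 0)]
    ring_nf
  have hc0 : c = 0 := by
    by_contra hc1
    have hc1 : 1 ≤ c := Nat.one_le_iff_ne_zero.mpr hc1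
    have h2c : (2:ℤ) ≤ 2 ^ c := by
      calc (2:ℤ) = 2 ^ 1 := (pow_one 2).symm
        _ ≤ 2 ^ c := pow_le_pow_right₀ (by norm_num) hc1
    -- not both flush
    have hcase : Q'.m i0 * 2 ^ c < Q.m i0 ∨ Q.m i0 + 1 < (Q'.m i0 + 1) * 2 ^ c := by
      by_contra h
      push_neg at h
      have e1 : Q'.m i0 * 2 ^ c = Q.m i0 := le_antisymm A h.1
      have e2 : Q.m i0 + 1 = (Q'.m i0 + 1) * 2 ^ c := le_antisymm B h.2
      have : (2:ℤ) ^ c = 1 := by nlinarith [e1, e2]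
      omega
    rcases hcase with hA | hB
    · -- point below left edge of Q but inside Q'
      set z : Fin d → ℝ := Function.update (corner Q) i0 ((Q.m i0 : ℝ) * 2 ^ Q.n - 2 ^ Q.n / 2) with hz
      have hzQ' : z ∈ Q'.toSet := by
        intro i
        rcases eq_or_ne i i0 with rfl | hne
        · rw [hz]
          simp only [Function.update_self]
          constructor
          · have hAr : ((Q'.m i0 : ℝ)) * 2 ^ c ≤ (Q.m i0 : ℝ) - 1 := by
              have : (Q'.m i0 * 2 ^ c : ℤ) ≤ Q.m i0 - 1 := by omega
              exact_mod_cast this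
            rw [hsplit]
            have hmul := mul_le_mul_of_nonneg_right hAr hpos.le
            nlinarith
          · have h2 := (hc i0).2
            have hco : corner Q i0 = (Q.m i0 : ℝ) * 2 ^ Q.n := rfl
            rw [hco] at h2
            linarith
        · rw [hz, Function.update_of_ne hne]
          exact hc i
      have hzQ := h21 hzQ' i0
      rw [hz] at hzQ
      simp only [Function.update_self] at hzQ
      linarith [hzQ.1]
    · -- point beyond right edge of Q but inside Q'
      set z : Fin d → ℝ := Function.update (corner Q) i0 (((Q.m i0 : ℝ) + 1) * 2 ^ Q.n + 2 ^ Q.n / 2) with hz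
      have hzQ' : z ∈ Q'.toSet := by
        intro i
        rcases eq_or_ne i i0 with rfl | hne
        · rw [hz]
          simp only [Function.update_self]
          constructor
          · have h1 := (hc i0).1
            have hco : corner Q i0 = (Q.m i0 : ℝ) * 2 ^ Q.n := rfl
            rw [hco] at h1
            linarith
          · have hBr : ((Q.m i0 : ℝ)) + 2 ≤ ((Q'.m i0 : ℝ) + 1) * 2 ^ c := by
              have : (Q.m i0 + 2 : ℤ) ≤ (Q'.m i0 + 1) * 2 ^ c := by omega
              exact_mod_cast this
            rw [hsplit]
            have hmul := mul_le_mul_of_nonneg_right hBr hpos.le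
            nlinarith
        · rw [hz, Function.update_of_ne hne]
          exact hc i
      have hzQ := h21 hzQ' i0
      rw [hz] at hzQ
      simp only [Function.update_self] at hzQ
      linarith [hzQ.2]
  exact eq_of_subset_of_level_eq h12 (hcn hc0)

lemma eq_of_mutual_subset (hd : 0 < d) {Q Q' : DyadicCube d}
    (h12 : Q.toSet ⊆ Q'.toSet) (h21 : Q'.toSet ⊆ Q.toSet) : Q = Q' := by
  rcases le_total Q.n Q'.n with hn | hn
  · exact eq_of_mutual_subset_aux hd h12 h21 hn
  · exact (eq_of_mutual_subset_aux hd h21 h12 hn).symm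

lemma level_le_of_subset (hd : 0 < d) {Q Q' : DyadicCube d}
    (hsub : Q.toSet ⊆ Q'.toSet) : Q.n ≤ Q'.n := by
  by_contra h
  push_neg at h
  have hsub' : Q'.toSet ⊆ Q.toSet :=
    toSet_subset_of_le ⟨corner Q, hsub (corner_mem Q), corner_mem Q⟩ h.le
  have := eq_of_mutual_subset hd hsub hsub'
  rw [this] at h
  exact lt_irrefl _ h

end WeakProof
namespace WeakProof
open DyadicCube
variable {d : ℕ}

lemma subset_parent (Q : DyadicCube d) : Q.toSet ⊆ Q.parent.toSet := by
  intro x hx i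
  have h1 : 2 * ((Q.m i).fdiv 2) ≤ Q.m i := by
    have := Int.mul_fdiv_add_fmod (Q.m i) 2
    have h0 : 0 ≤ (Q.m i).fmod 2 := Int.fmod_nonneg_of_pos _ (by norm_num)
    omega
  have h2 : Q.m i ≤ 2 * ((Q.m i).fdiv 2) + 1 := by
    have := Int.mul_fdiv_add_fmod (Q.m i) 2
    have h0 : (Q.m i).fmod 2 < 2 := Int.fmod_lt_of_pos _ (by norm_num)
    omega
  have hpos : (0:ℝ) < 2 ^ Q.n := two_zpow_pos Q.n
  have hsplit : (2:ℝ) ^ (Q.n + 1) = 2 * 2 ^ Q.n := by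
    rw [zpow_add_one₀ (by norm_num : (2:ℝ) ≠ 0)]; ring
  have hr1 : ((2 * ((Q.m i).fdiv 2) : ℤ) : ℝ) ≤ ((Q.m i : ℤ) : ℝ) := by exact_mod_cast h1
  have hr2 : ((Q.m i : ℤ) : ℝ) ≤ ((2 * ((Q.m i).fdiv 2) + 1 : ℤ) : ℝ) := by exact_mod_cast h2
  push_cast at hr1 hr2
  constructor
  · show ((Q.m i).fdiv 2 : ℝ) * 2 ^ (Q.n + 1) ≤ x i
    rw [hsplit]
    have := (hx i).1
    nlinarith
  · show x i < (((Q.m i).fdiv 2 : ℝ) + 1) * 2 ^ (Q.n + 1)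
    rw [hsplit]
    have := (hx i).2
    nlinarith

lemma subset_ancestor (k : ℕ) (Q : DyadicCube d) : Q.toSet ⊆ (DyadicCube.ancestor k Q).toSet := by
  induction k with
  | zero => exact subset_refl _
  | succ k ih =>
    have : DyadicCube.ancestor (k+1) Q = (DyadicCube.ancestor k Q).parent := by
      simp [DyadicCube.ancestor, Function.iterate_succ_apply']
    rw [this]
    exact ih.trans (subset_parent _)

/-- dyadic cubes are bounded, hence have finite measure for locally finite measures -/
lemma measure_toSet_ne_top (μ : Measure (Fin d → ℝ)) [IsLocallyFiniteMeasure μ]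
    (Q : DyadicCube d) : μ Q.toSet ≠ ⊤ := by
  have hsub : Q.toSet ⊆ Set.Icc (corner Q) (fun i => ((Q.m i : ℝ) + 1) * 2 ^ Q.n) := by
    intro x hx
    constructor
    · intro i; exact (hx i).1
    · intro i; exact (hx i).2.le
  have hcomp : IsCompact (Set.Icc (corner Q) (fun i => ((Q.m i : ℝ) + 1) * 2 ^ Q.n)) :=
    isCompact_Icc
  exact ne_top_of_le_ne_top hcomp.measure_lt_top.ne (measure_mono hsub)

/-- two intersecting cubes are nested -/
lemma nested_of_inter (hd : 0 < d) {Q Q' : DyadicCube d}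
    (hx : (Q.toSet ∩ Q'.toSet).Nonempty) :
    Q.toSet ⊆ Q'.toSet ∨ Q'.toSet ⊆ Q.toSet := by
  rcases le_total Q.n Q'.n with hn | hn
  · exact Or.inl (toSet_subset_of_le hx hn)
  · exact Or.inr (toSet_subset_of_le (by rwa [Set.inter_comm] at hx) hn)

end WeakProof
namespace WeakProof
open DyadicCube
variable {d : ℕ}

/-- cubes of `𝒮` between `A` and `B` (non-strict above) -/
lemma finite_between (hd : 0 < d) (𝒮 : Set (DyadicCube d)) (A B : DyadicCube d) :
    {G : DyadicCube d | G ∈ 𝒮 ∧ A.toSet ⊆ G.toSet ∧ G.toSet ⊆ B.toSet}.Finite := by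
  set s := {G : DyadicCube d | G ∈ 𝒮 ∧ A.toSet ⊆ G.toSet ∧ G.toSet ⊆ B.toSet}
  have hinj : Set.InjOn DyadicCube.n s := by
    intro G hG G' hG' hnn
    have h1 : G.toSet ⊆ G'.toSet :=
      toSet_subset_of_le ⟨corner A, hG.2.1 (corner_mem A), hG'.2.1 (corner_mem A)⟩ hnn.le
    exact eq_of_subset_of_level_eq h1 hnn
  have himg : DyadicCube.n '' s ⊆ Set.Icc A.n B.n := by
    rintro _ ⟨G, hG, rfl⟩
    exact ⟨level_le_of_subset hd hG.2.1, level_le_of_subset hd hG.2.2⟩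
  exact Set.Finite.of_finite_image ((Set.finite_Icc A.n B.n).subset himg) hinj

lemma finite_between_strict (hd : 0 < d) (𝒮 : Set (DyadicCube d)) (A B : DyadicCube d) :
    {G : DyadicCube d | G ∈ 𝒮 ∧ A.toSet ⊆ G.toSet ∧ G.toSet ⊂ B.toSet}.Finite := by
  apply (finite_between hd 𝒮 A B).subset
  rintro G ⟨h1, h2, h3⟩
  exact ⟨h1, h2, h3.subset⟩

lemma exists_max_nonstrict (hd : 0 < d) {𝒮 : Set (DyadicCube d)} {A B : DyadicCube d}
    (hA : A ∈ 𝒮) (hAB : A.toSet ⊆ B.toSet) :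
    ∃ M, M ∈ 𝒮 ∧ A.toSet ⊆ M.toSet ∧ M.toSet ⊆ B.toSet ∧
      ∀ G ∈ 𝒮, M.toSet ⊆ G.toSet → G.toSet ⊆ B.toSet → G = M := by
  set s := {G : DyadicCube d | G ∈ 𝒮 ∧ A.toSet ⊆ G.toSet ∧ G.toSet ⊆ B.toSet}
  have hfin : s.Finite := finite_between hd 𝒮 A B
  have hne : s.Nonempty := ⟨A, hA, subset_refl _, hAB⟩
  obtain ⟨M, hM, hmax⟩ := hfin.exists_maximal_wrt DyadicCube.n s hne
  refine ⟨M, hM.1, hM.2.1, hM.2.2, ?_⟩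
  intro G hG hMG hGB
  have hGs : G ∈ s := ⟨hG, hM.2.1.trans hMG, hGB⟩
  have hn : M.n ≤ G.n := level_le_of_subset hd hMG
  have := hmax G hGs hn
  exact (eq_of_subset_of_level_eq hMG this).symm

lemma exists_sparse_child (hd : 0 < d) {𝒮 : Set (DyadicCube d)} {A B : DyadicCube d}
    (hA : A ∈ 𝒮) (hAB : A.toSet ⊂ B.toSet) :
    ∃ M ∈ sparseChildren 𝒮 B, A.toSet ⊆ M.toSet := by
  set s := {G : DyadicCube d | G ∈ 𝒮 ∧ A.toSet ⊆ G.toSet ∧ G.toSet ⊂ B.toSet}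
  have hfin : s.Finite := finite_between_strict hd 𝒮 A B
  have hne : s.Nonempty := ⟨A, hA, subset_refl _, hAB⟩
  obtain ⟨M, hM, hmax⟩ := hfin.exists_maximal_wrt DyadicCube.n s hne
  refine ⟨M, ⟨hM.1, hM.2.2, ?_⟩, hM.2.1⟩
  intro G hG hGB hMG
  have hGs : G ∈ s := ⟨hG, hM.2.1.trans hMG, hGB⟩
  have hn : M.n ≤ G.n := level_le_of_subset hd hMG
  have := hmax G hGs hn
  exact (eq_of_subset_of_level_eq hMG this).symm

variable {μ : Measure (Fin d → ℝ)} {𝒮 : Set (DyadicCube d)}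

lemma child_bound
    (hsp : ∀ S ∈ 𝒮, ∑' S' : sparseChildren 𝒮 S, μ (S' : DyadicCube d).toSet ≤ μ S.toSet / 2)
    {S G : DyadicCube d} (hS : S ∈ 𝒮) (hG : G ∈ sparseChildren 𝒮 S) :
    μ G.toSet ≤ μ S.toSet / 2 :=
  le_trans (ENNReal.le_tsum (⟨G, hG⟩ : sparseChildren 𝒮 S)) (hsp S hS)

lemma measure_double (hd : 0 < d)
    (hsp : ∀ S ∈ 𝒮, ∑' S' : sparseChildren 𝒮 S, μ (S' : DyadicCube d).toSet ≤ μ S.toSet / 2)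
    {P T : DyadicCube d} (hP : P ∈ 𝒮) (hT : T ∈ 𝒮) (hPT : P.toSet ⊂ T.toSet) :
    2 * μ P.toSet ≤ μ T.toSet := by
  obtain ⟨M, hM, hPM⟩ := exists_sparse_child hd hP hPT
  have h1 : μ P.toSet ≤ μ M.toSet := measure_mono hPM
  have h2 : μ M.toSet ≤ μ T.toSet / 2 := child_bound hsp hT hM
  calc 2 * μ P.toSet ≤ 2 * (μ T.toSet / 2) := by
        exact mul_le_mul_right (h1.trans h2) 2
    _ ≤ μ T.toSet := by
        exact ENNReal.mul_div_le

/-- S-cubes between P (inclusive) and T (exclusive) -/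
def depSet (𝒮 : Set (DyadicCube d)) (P T : DyadicCube d) : Set (DyadicCube d) :=
  {S | S ∈ 𝒮 ∧ P.toSet ⊆ S.toSet ∧ S.toSet ⊂ T.toSet}

lemma depSet_finite (hd : 0 < d) (P T : DyadicCube d) : (depSet 𝒮 P T).Finite :=
  finite_between_strict hd 𝒮 P T

/-- number of S-cubes strictly between P and T -/
def dep (𝒮 : Set (DyadicCube d)) (P T : DyadicCube d) : ℕ := (depSet 𝒮 P T).ncard

lemma dep_step (hd : 0 < d) {P T : DyadicCube d} (hne : (depSet 𝒮 P T).Nonempty) :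
    ∃ M, M ∈ 𝒮 ∧ P.toSet ⊆ M.toSet ∧ M.toSet ⊂ T.toSet ∧
      depSet 𝒮 P M = depSet 𝒮 P T \ {M} ∧ M ∈ depSet 𝒮 P T := by
  obtain ⟨M, hM, hmax⟩ := (depSet_finite hd P T).exists_maximal_wrt DyadicCube.n _ hne
  refine ⟨M, hM.1, hM.2.1, hM.2.2, ?_, hM⟩
  ext S'
  constructor
  · rintro ⟨h1, h2, h3⟩
    exact ⟨⟨h1, h2, h3.trans hM.2.2⟩, by
      intro hEq
      rw [Set.mem_singleton_iff] at hEq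
      rw [hEq] at h3
      exact h3.2 (subset_refl _)⟩
  · rintro ⟨⟨h1, h2, h3⟩, hne'⟩
    rw [Set.mem_singleton_iff] at hne'
    refine ⟨h1, h2, ?_⟩
    rcases le_or_gt S'.n M.n with hn | hn
    · have hsub : S'.toSet ⊆ M.toSet :=
        toSet_subset_of_le ⟨corner P, h2 (corner_mem P), hM.2.1 (corner_mem P)⟩ hn
      refine ⟨hsub, fun hrev => ?_⟩
      exact hne' (eq_of_mutual_subset hd hsub hrev)
    · exfalso
      have := hmax S' ⟨h1, h2, h3⟩ hn.le
      omega

lemma mu_pow_dep (hd : 0 < d)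
    (hsp : ∀ S ∈ 𝒮, ∑' S' : sparseChildren 𝒮 S, μ (S' : DyadicCube d).toSet ≤ μ S.toSet / 2)
    {P : DyadicCube d} (hP : P ∈ 𝒮) :
    ∀ (j : ℕ) (T : DyadicCube d), T ∈ 𝒮 → P.toSet ⊆ T.toSet → dep 𝒮 P T = j →
      (2:ℝ≥0∞) ^ j * μ P.toSet ≤ μ T.toSet := by
  intro j
  induction j with
  | zero =>
    intro T _ hPT _
    simpa using measure_mono hPT
  | succ j ih =>
    intro T hT hPT hdep
    have hne : (depSet 𝒮 P T).Nonempty := by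
      apply Set.nonempty_of_ncard_ne_zero
      rw [show (depSet 𝒮 P T).ncard = dep 𝒮 P T from rfl, hdep]
      omega
    obtain ⟨M, hM𝒮, hPM, hMT, hEq, hMmem⟩ := dep_step hd hne
    have hdepM : dep 𝒮 P M = j := by
      have := Set.ncard_diff_singleton_of_mem hMmem
      rw [show dep 𝒮 P M = (depSet 𝒮 P M).ncard from rfl, hEq, this,
        show (depSet 𝒮 P T).ncard = dep 𝒮 P T from rfl, hdep]
      omega
    have h1 := ih M hM𝒮 hPM hdepM
    have h2 := measure_double hd hsp hM𝒮 hT hMT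
    calc (2:ℝ≥0∞) ^ (j+1) * μ P.toSet = 2 * ((2:ℝ≥0∞) ^ j * μ P.toSet) := by ring
      _ ≤ 2 * μ M.toSet := mul_le_mul_right h1 2
      _ ≤ μ T.toSet := h2

lemma dep_lt_of_ssubset (hd : 0 < d) {P S S' : DyadicCube d}
    (hS : S ∈ 𝒮) (hPS : P.toSet ⊆ S.toSet) (hSS : S.toSet ⊂ S'.toSet) :
    dep 𝒮 P S < dep 𝒮 P S' := by
  have hins : insert S (depSet 𝒮 P S) ⊆ depSet 𝒮 P S' := by
    rintro G (rfl | ⟨h1, h2, h3⟩)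
    · exact ⟨hS, hPS, hSS⟩
    · exact ⟨h1, h2, h3.trans hSS⟩
  have hSnot : S ∉ depSet 𝒮 P S := fun h => h.2.2.2 (subset_refl _)
  have h1 : (insert S (depSet 𝒮 P S)).ncard = dep 𝒮 P S + 1 :=
    Set.ncard_insert_of_notMem hSnot (depSet_finite hd P S)
  have h2 : (insert S (depSet 𝒮 P S)).ncard ≤ dep 𝒮 P S' :=
    Set.ncard_le_ncard hins (depSet_finite hd P S')
  omega

end WeakProof
namespace WeakProof
open DyadicCube
variable {d : ℕ}

/-- `HC 𝒮 i P R`: `P ∈ 𝒮` lies at the bottom of a chain of `i` strictly increasing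
`𝒮`-cubes whose top is contained in `R`. -/
def HC (𝒮 : Set (DyadicCube d)) : ℕ → DyadicCube d → Set (Fin d → ℝ) → Prop
  | 0, P, R => P ∈ 𝒮 ∧ P.toSet ⊆ R
  | (i+1), P, R => ∃ T, T ∈ 𝒮 ∧ T.toSet ⊆ R ∧
      ∃ T', T' ∈ 𝒮 ∧ T'.toSet ⊂ T.toSet ∧ HC 𝒮 i P T'.toSet

lemma HC_mono {𝒮 : Set (DyadicCube d)} {i : ℕ} {P : DyadicCube d}
    {R R' : Set (Fin d → ℝ)} (h : HC 𝒮 i P R) (hRR : R ⊆ R') : HC 𝒮 i P R' := by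
  cases i with
  | zero => exact ⟨h.1, h.2.trans hRR⟩
  | succ i =>
    obtain ⟨T, h1, h2, rest⟩ := h
    exact ⟨T, h1, h2.trans hRR, rest⟩

lemma HC_subset {𝒮 : Set (DyadicCube d)} {P : DyadicCube d} :
    ∀ {i : ℕ} {R : Set (Fin d → ℝ)}, HC 𝒮 i P R → P ∈ 𝒮 ∧ P.toSet ⊆ R := by
  intro i
  induction i with
  | zero => intro R h; exact h
  | succ i ih =>
    intro R h
    obtain ⟨T, _, hTR, T', _, hT'T, hrec⟩ := h
    have := ih hrec
    exact ⟨this.1, this.2.trans (hT'T.subset.trans hTR)⟩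

lemma HC_of_dep (hd : 0 < d) {𝒮 : Set (DyadicCube d)} :
    ∀ (j : ℕ) (P S : DyadicCube d), P ∈ 𝒮 → S ∈ 𝒮 → P.toSet ⊆ S.toSet →
      dep 𝒮 P S = j → HC 𝒮 j P S.toSet := by
  intro j
  induction j with
  | zero => intro P S hP _ hPS _; exact ⟨hP, hPS⟩
  | succ j ih =>
    intro P S hP hS hPS hdep
    have hne : (depSet 𝒮 P S).Nonempty := by
      apply Set.nonempty_of_ncard_ne_zero
      rw [show (depSet 𝒮 P S).ncard = dep 𝒮 P S from rfl, hdep]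
      omega
    obtain ⟨M, hM𝒮, hPM, hMS, hEq, hMmem⟩ := dep_step hd hne
    have hdepM : dep 𝒮 P M = j := by
      have := Set.ncard_diff_singleton_of_mem hMmem
      rw [show dep 𝒮 P M = (depSet 𝒮 P M).ncard from rfl, hEq, this,
        show (depSet 𝒮 P S).ncard = dep 𝒮 P S from rfl, hdep]
      omega
    exact ⟨S, hS, subset_refl _, M, hM𝒮, hMS, ih P M hP hM𝒮 hPM hdepM⟩

variable {μ : Measure (Fin d → ℝ)} {𝒮 : Set (DyadicCube d)}

/-- Key decay estimate: disjoint `𝒮`-cubes that sit at depth `≥ i` inside `Q`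
have total measure at most `2^{-i} μ(Q)`. -/
lemma decay (hd : 0 < d)
    (hsp : ∀ S ∈ 𝒮, ∑' S' : sparseChildren 𝒮 S, μ (S' : DyadicCube d).toSet ≤ μ S.toSet / 2) :
    ∀ (i : ℕ) (Q : DyadicCube d) (F : Finset (DyadicCube d)),
      (∀ P ∈ F, HC 𝒮 i P Q.toSet) →
      ((F : Set (DyadicCube d)).PairwiseDisjoint DyadicCube.toSet) →
      ∑ P ∈ F, μ P.toSet ≤ (2:ℝ≥0∞)⁻¹ ^ i * μ Q.toSet := by
  intro i
  induction i with
  | zero =>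
    intro Q F hHC hdisj
    have hsum : ∑ P ∈ F, μ P.toSet = μ (⋃ P ∈ F, P.toSet) :=
      (measure_biUnion_finset hdisj (fun P _ => measurableSet_toSet P)).symm
    rw [hsum]
    simp only [pow_zero, one_mul]
    apply measure_mono
    intro x hx
    simp only [Set.mem_iUnion] at hx
    obtain ⟨P, hP, hxP⟩ := hx
    exact (hHC P hP).2 hxP
  | succ i ih =>
    intro Q F hHC hdisj
    -- choice of chain data
    choose! T hT𝒮 hTQ T' hT'𝒮 hT'T hrec using hHC
    -- maximal 𝒮-cube above T P inside Q
    have hmaxex : ∀ P ∈ F, ∃ M, M ∈ 𝒮 ∧ (T P).toSet ⊆ M.toSet ∧ M.toSet ⊆ Q.toSet ∧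
        ∀ G ∈ 𝒮, M.toSet ⊆ G.toSet → G.toSet ⊆ Q.toSet → G = M := by
      intro P hP
      exact exists_max_nonstrict hd (hT𝒮 P hP) (hTQ P hP)
    choose! Th hTh𝒮 hTTh hThQ hThmax using hmaxex
    -- sparse child of Th P containing T' P
    have hchildex : ∀ P ∈ F, ∃ M ∈ sparseChildren 𝒮 (Th P), (T' P).toSet ⊆ M.toSet := by
      intro P hP
      apply exists_sparse_child hd (hT'𝒮 P hP)
      exact lt_of_lt_of_le (hT'T P hP) (hTTh P hP)
    choose! Gf hGfchild hGfsub using hchildex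
    -- fiberwise sum over Th values
    rw [← Finset.sum_fiberwise_of_maps_to (g := Th) (t := F.image Th)
      (fun P hP => Finset.mem_image_of_mem Th hP) (fun P => μ P.toSet)]
    -- bound each fiber
    have hfiber : ∀ TT ∈ F.image Th,
        ∑ P ∈ F.filter (fun P => Th P = TT), μ P.toSet ≤
          (2:ℝ≥0∞)⁻¹ ^ i * (μ TT.toSet / 2) := by
      intro TT hTT
      obtain ⟨P₀, hP₀F, rfl⟩ := Finset.mem_image.mp hTT
      set F₁ := F.filter (fun P => Th P = Th P₀) with hF₁
      rw [← Finset.sum_fiberwise_of_maps_to (g := Gf) (t := F₁.image Gf)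
        (fun P hP => Finset.mem_image_of_mem Gf hP) (fun P => μ P.toSet)]
      have hGbound : ∀ G ∈ F₁.image Gf,
          ∑ P ∈ F₁.filter (fun P => Gf P = G), μ P.toSet ≤ (2:ℝ≥0∞)⁻¹ ^ i * μ G.toSet := by
        intro G hG
        obtain ⟨P₁, hP₁, rfl⟩ := Finset.mem_image.mp hG
        apply ih
        · intro P hP
          have hPF₁ := Finset.mem_filter.mp hP
          have hPF := (Finset.mem_filter.mp hPF₁.1).1
          have h1 : HC 𝒮 i P (T' P).toSet := hrec P hPF
          have h2 : (T' P).toSet ⊆ (Gf P).toSet := hGfsub P hPF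
          rw [← hPF₁.2]
          exact HC_mono h1 h2
        · apply hdisj.subset
          intro P hP
          exact (Finset.mem_filter.mp (Finset.mem_filter.mp hP).1).1
      calc ∑ G ∈ F₁.image Gf, ∑ P ∈ F₁.filter (fun P => Gf P = G), μ P.toSet
          ≤ ∑ G ∈ F₁.image Gf, (2:ℝ≥0∞)⁻¹ ^ i * μ G.toSet := Finset.sum_le_sum hGbound
        _ = (2:ℝ≥0∞)⁻¹ ^ i * ∑ G ∈ F₁.image Gf, μ G.toSet := by rw [Finset.mul_sum]
        _ ≤ (2:ℝ≥0∞)⁻¹ ^ i * (μ (Th P₀).toSet / 2) := by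
            apply mul_le_mul_right
            -- finite sum of distinct sparse children ≤ tsum ≤ μ(TT)/2
            have hmem : ∀ G ∈ F₁.image Gf, G ∈ sparseChildren 𝒮 (Th P₀) := by
              intro G hG
              obtain ⟨P₁, hP₁, rfl⟩ := Finset.mem_image.mp hG
              have hPF := (Finset.mem_filter.mp hP₁).1
              have hPeq := (Finset.mem_filter.mp hP₁).2
              have := hGfchild P₁ hPF
              rwa [hPeq] at this
            set 𝒢 := F₁.image Gf with h𝒢
            have key : ∑ G ∈ 𝒢, μ G.toSet ≤
                ∑' S' : sparseChildren 𝒮 (Th P₀), μ (S' : DyadicCube d).toSet := by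
              have h1 : ∑ G ∈ 𝒢, μ G.toSet = ∑ g ∈ 𝒢.attach, μ (g : DyadicCube d).toSet :=
                (Finset.sum_attach 𝒢 (fun G => μ G.toSet)).symm
              rw [h1]
              have hinj : Function.Injective
                  (fun g : {x // x ∈ 𝒢} => (⟨g.1, hmem g.1 g.2⟩ : sparseChildren 𝒮 (Th P₀))) := by
                intro a b hab
                have h2 : (a : DyadicCube d) = (b : DyadicCube d) := by
                  have := congrArg (fun z : sparseChildren 𝒮 (Th P₀) => (z : DyadicCube d)) hab
                  simpa using this
                exact Subtype.ext h2
              have h3 : ∑ g ∈ 𝒢.attach, μ (g : DyadicCube d).toSet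
                  = ∑ x ∈ 𝒢.attach.map ⟨_, hinj⟩, μ (x : DyadicCube d).toSet := by
                rw [Finset.sum_map]
                rfl
              rw [h3]
              exact ENNReal.sum_le_tsum _
            exact key.trans (hsp (Th P₀) (hTh𝒮 P₀ hP₀F))
    calc ∑ TT ∈ F.image Th, ∑ P ∈ F.filter (fun P => Th P = TT), μ P.toSet
        ≤ ∑ TT ∈ F.image Th, (2:ℝ≥0∞)⁻¹ ^ i * (μ TT.toSet / 2) := Finset.sum_le_sum hfiber
      _ = (2:ℝ≥0∞)⁻¹ ^ (i+1) * ∑ TT ∈ F.image Th, μ TT.toSet := by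
          rw [Finset.mul_sum]
          apply Finset.sum_congr rfl
          intro TT _
          rw [ENNReal.div_eq_inv_mul, pow_succ]
          ring
      _ ≤ (2:ℝ≥0∞)⁻¹ ^ (i+1) * μ Q.toSet := by
          apply mul_le_mul_right
          -- the maximal cubes are pairwise disjoint and inside Q
          have hdisj' : ((F.image Th : Set (DyadicCube d))).PairwiseDisjoint DyadicCube.toSet := by
            intro a ha b hb hab
            simp only [Finset.coe_image, Set.mem_image, Finset.mem_coe] at ha hb
            obtain ⟨Pa, hPa, rfl⟩ := ha
            obtain ⟨Pb, hPb, rfl⟩ := hb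
            rw [Function.onFun]
            by_contra hnd
            rw [Set.not_disjoint_iff] at hnd
            rcases nested_of_inter hd (Set.nonempty_def.mpr hnd) with hsub | hsub
            · exact hab (hThmax Pa hPa (Th Pb) (hTh𝒮 Pb hPb) hsub (hThQ Pb hPb)).symm
            · exact hab (hThmax Pb hPb (Th Pa) (hTh𝒮 Pa hPa) hsub (hThQ Pa hPa))
          have hsum : ∑ TT ∈ F.image Th, μ TT.toSet = μ (⋃ TT ∈ F.image Th, TT.toSet) :=
            (measure_biUnion_finset hdisj' (fun P _ => measurableSet_toSet P)).symm
          rw [hsum]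
          apply measure_mono
          intro x hx
          simp only [Set.mem_iUnion] at hx
          obtain ⟨TT, hTT, hxTT⟩ := hx
          obtain ⟨P, hP, rfl⟩ := Finset.mem_image.mp hTT
          exact hThQ P hP hxTT

end WeakProof
namespace WeakProof
open DyadicCube
variable {d : ℕ}

section Warith

lemma ennreal_half_sum : (2:ℝ≥0∞)⁻¹ + 2⁻¹ = 1 := by
  rw [← two_mul]
  exact ENNReal.mul_inv_cancel two_ne_zero ENNReal.ofNat_ne_top

lemma ennreal_one_sub_half : (1:ℝ≥0∞) - 2⁻¹ = 2⁻¹ :=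
  ENNReal.sub_eq_of_eq_add (by simp) (by rw [ennreal_half_sum])

lemma ennreal_tsum_half_pow : ∑' j : ℕ, (2:ℝ≥0∞)⁻¹ ^ j = 2 := by
  rw [ENNReal.tsum_geometric, ennreal_one_sub_half]
  simp

end Warith

variable (μ ν : Measure (Fin d → ℝ)) (𝒮 : Set (DyadicCube d)) (k : ℕ)

/-- weight of a cube -/
def wS (S : DyadicCube d) : ℝ≥0∞ :=
  ν (DyadicCube.ancestor k S).toSet / μ (DyadicCube.ancestor k S).toSet

/-- total weight of the `𝒮`-cubes containing `P` -/
def GP (P : DyadicCube d) : ℝ≥0∞ :=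
  ∑' S : {S : DyadicCube d // S ∈ 𝒮 ∧ P.toSet ⊆ S.toSet}, wS μ ν k (S : DyadicCube d)

variable {μ ν 𝒮 k}

lemma dep_injective (hd : 0 < d) (P : DyadicCube d) :
    Function.Injective
      (fun S : {S : DyadicCube d // S ∈ 𝒮 ∧ P.toSet ⊆ S.toSet} => dep 𝒮 P (S : DyadicCube d)) := by
  intro S S' h
  simp only at h
  by_contra hne
  have hvalne : (S : DyadicCube d) ≠ (S' : DyadicCube d) := fun hv => hne (Subtype.ext hv)
  have hint : ((S : DyadicCube d).toSet ∩ (S' : DyadicCube d).toSet).Nonempty :=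
    ⟨corner P, S.2.2 (corner_mem P), S'.2.2 (corner_mem P)⟩
  rcases nested_of_inter hd hint with hsub | hsub
  · have hss : (S : DyadicCube d).toSet ⊂ (S' : DyadicCube d).toSet :=
      ⟨hsub, fun hrev => hvalne (eq_of_mutual_subset hd hsub hrev)⟩
    have := dep_lt_of_ssubset hd S.2.1 S.2.2 hss
    omega
  · have hss : (S' : DyadicCube d).toSet ⊂ (S : DyadicCube d).toSet :=
      ⟨hsub, fun hrev => hvalne (eq_of_mutual_subset hd hrev hsub)⟩
    have := dep_lt_of_ssubset hd S'.2.1 S'.2.2 hss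
    omega

lemma wS_le_of_dep (hd : 0 < d)
    (hsp : ∀ S ∈ 𝒮, ∑' S' : sparseChildren 𝒮 S, μ (S' : DyadicCube d).toSet ≤ μ S.toSet / 2)
    {P S : DyadicCube d} (hP : P ∈ 𝒮) (hS : S ∈ 𝒮) (hPS : P.toSet ⊆ S.toSet) :
    wS μ ν k S ≤ (2:ℝ≥0∞)⁻¹ ^ (dep 𝒮 P S) * (ν Set.univ * (μ P.toSet)⁻¹) := by
  set Q := DyadicCube.ancestor k S
  have hQ : S.toSet ⊆ Q.toSet := subset_ancestor k S
  have h1 : wS μ ν k S ≤ ν Set.univ * (μ Q.toSet)⁻¹ := by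
    rw [wS, div_eq_mul_inv]
    exact mul_le_mul' (measure_mono (Set.subset_univ _)) le_rfl
  have h2 : (2:ℝ≥0∞) ^ (dep 𝒮 P S) * μ P.toSet ≤ μ Q.toSet := by
    refine le_trans (mu_pow_dep hd hsp hP (dep 𝒮 P S) S hS hPS rfl) (measure_mono hQ)
  have h3 : (μ Q.toSet)⁻¹ ≤ ((2:ℝ≥0∞) ^ (dep 𝒮 P S) * μ P.toSet)⁻¹ :=
    ENNReal.inv_le_inv' h2
  have h4 : ((2:ℝ≥0∞) ^ (dep 𝒮 P S) * μ P.toSet)⁻¹ =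
      (2:ℝ≥0∞)⁻¹ ^ (dep 𝒮 P S) * (μ P.toSet)⁻¹ := by
    rw [ENNReal.mul_inv (Or.inl (by positivity)) (Or.inl (by
      exact ENNReal.pow_ne_top ENNReal.ofNat_ne_top)), ← ENNReal.inv_pow]
  calc wS μ ν k S ≤ ν Set.univ * (μ Q.toSet)⁻¹ := h1
    _ ≤ ν Set.univ * ((2:ℝ≥0∞)⁻¹ ^ (dep 𝒮 P S) * (μ P.toSet)⁻¹) := by
        rw [← h4]; exact mul_le_mul' le_rfl h3
    _ = (2:ℝ≥0∞)⁻¹ ^ (dep 𝒮 P S) * (ν Set.univ * (μ P.toSet)⁻¹) := by ring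

lemma GP_le (hd : 0 < d)
    (hsp : ∀ S ∈ 𝒮, ∑' S' : sparseChildren 𝒮 S, μ (S' : DyadicCube d).toSet ≤ μ S.toSet / 2)
    {P : DyadicCube d} (hP : P ∈ 𝒮) :
    GP μ ν 𝒮 k P ≤ 2 * (ν Set.univ * (μ P.toSet)⁻¹) := by
  have hterm : ∀ S : {S : DyadicCube d // S ∈ 𝒮 ∧ P.toSet ⊆ S.toSet},
      wS μ ν k (S : DyadicCube d) ≤
        (2:ℝ≥0∞)⁻¹ ^ (dep 𝒮 P (S : DyadicCube d)) * (ν Set.univ * (μ P.toSet)⁻¹) :=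
    fun S => wS_le_of_dep hd hsp hP S.2.1 S.2.2
  calc GP μ ν 𝒮 k P
      ≤ ∑' S : {S : DyadicCube d // S ∈ 𝒮 ∧ P.toSet ⊆ S.toSet},
          (2:ℝ≥0∞)⁻¹ ^ (dep 𝒮 P (S : DyadicCube d)) * (ν Set.univ * (μ P.toSet)⁻¹) :=
        ENNReal.tsum_le_tsum hterm
    _ = (∑' S : {S : DyadicCube d // S ∈ 𝒮 ∧ P.toSet ⊆ S.toSet},
          (2:ℝ≥0∞)⁻¹ ^ (dep 𝒮 P (S : DyadicCube d))) * (ν Set.univ * (μ P.toSet)⁻¹) :=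
        ENNReal.tsum_mul_right
    _ ≤ (∑' j : ℕ, (2:ℝ≥0∞)⁻¹ ^ j) * (ν Set.univ * (μ P.toSet)⁻¹) := by
        exact mul_le_mul' (ENNReal.tsum_comp_le_tsum_of_injective (dep_injective hd P)
          (fun j => (2:ℝ≥0∞)⁻¹ ^ j)) le_rfl
    _ = 2 * (ν Set.univ * (μ P.toSet)⁻¹) := by rw [ennreal_tsum_half_pow]

end WeakProof
namespace WeakProof
open DyadicCube
variable {d : ℕ}

/-- the pigeonhole thresholds -/
def sfun (τ : ℝ≥0∞) (j : ℕ) : ℝ≥0∞ := 4⁻¹ * ((3:ℝ≥0∞) * 4⁻¹) ^ j * τ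

lemma four_ne_zero' : (4:ℝ≥0∞) ≠ 0 := by norm_num
lemma four_ne_top' : (4:ℝ≥0∞) ≠ ⊤ := by norm_num
lemma three_ne_zero' : (3:ℝ≥0∞) ≠ 0 := by norm_num
lemma three_ne_top' : (3:ℝ≥0∞) ≠ ⊤ := by norm_num

lemma r34_ne_zero : (3:ℝ≥0∞) * 4⁻¹ ≠ 0 := by
  apply mul_ne_zero three_ne_zero'
  simp [four_ne_top']
lemma r34_ne_top : (3:ℝ≥0∞) * 4⁻¹ ≠ ⊤ := by
  exact ENNReal.mul_ne_top three_ne_top' (by simp [four_ne_zero'])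

lemma one_sub_r34 : (1:ℝ≥0∞) - 3 * 4⁻¹ = 4⁻¹ := by
  apply ENNReal.sub_eq_of_eq_add (by simpa using r34_ne_top)
  have h : (4:ℝ≥0∞) * 4⁻¹ = 4⁻¹ + 3 * 4⁻¹ := by
    have h4 : (4:ℝ≥0∞) = 1 + 3 := by norm_num
    rw [h4, add_mul, one_mul]
  rw [← ENNReal.mul_inv_cancel four_ne_zero' four_ne_top', h]

lemma tsum_sfun (τ : ℝ≥0∞) : ∑' j : ℕ, sfun τ j = τ := by
  have h1 : ∑' j : ℕ, sfun τ j = (4⁻¹ * τ) * ∑' j : ℕ, ((3:ℝ≥0∞) * 4⁻¹) ^ j := by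
    rw [← ENNReal.tsum_mul_left]
    apply tsum_congr
    intro j
    rw [sfun]
    ring
  rw [h1, ENNReal.tsum_geometric, one_sub_r34, inv_inv]
  calc 4⁻¹ * τ * 4 = (4⁻¹ * 4) * τ := by ring
    _ = τ := by rw [ENNReal.inv_mul_cancel four_ne_zero' four_ne_top', one_mul]

lemma sfun_ne_zero {τ : ℝ≥0∞} (hτ : τ ≠ 0) (j : ℕ) : sfun τ j ≠ 0 := by
  rw [sfun]
  apply mul_ne_zero (mul_ne_zero ?_ (pow_ne_zero j r34_ne_zero)) hτ
  simp [four_ne_top']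

lemma sfun_ne_top {τ : ℝ≥0∞} (hτ : τ ≠ ⊤) (j : ℕ) : sfun τ j ≠ ⊤ := by
  rw [sfun]
  exact ENNReal.mul_ne_top (ENNReal.mul_ne_top (by simp [four_ne_zero'])
    (ENNReal.pow_ne_top r34_ne_top)) hτ

/-- pigeonhole: some cube in the chain above `P` has a large weight -/
lemma pigeonhole (hd : 0 < d) {μ ν : Measure (Fin d → ℝ)} {𝒮 : Set (DyadicCube d)} {k : ℕ}
    {P : DyadicCube d} {τ : ℝ≥0∞}
    (hlt : τ < GP μ ν 𝒮 k P) :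
    ∃ S, S ∈ 𝒮 ∧ P.toSet ⊆ S.toSet ∧ sfun τ (dep 𝒮 P S) < wS μ ν k S := by
  by_contra hcon
  push_neg at hcon
  have hle : GP μ ν 𝒮 k P ≤ τ := by
    calc GP μ ν 𝒮 k P
        ≤ ∑' S : {S : DyadicCube d // S ∈ 𝒮 ∧ P.toSet ⊆ S.toSet},
            sfun τ (dep 𝒮 P (S : DyadicCube d)) :=
          ENNReal.tsum_le_tsum (fun S => hcon (S : DyadicCube d) S.2.1 S.2.2)
      _ ≤ ∑' j : ℕ, sfun τ j :=
          ENNReal.tsum_comp_le_tsum_of_injective (dep_injective hd P) (sfun τ)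
      _ = τ := tsum_sfun τ
  exact absurd hlt (not_lt.mpr hle)

/-- in a finite family of cubes, every cube is contained in a maximal one -/
lemma finset_max_cover (hd : 0 < d) (𝒬 : Finset (DyadicCube d)) :
    ∀ R₀ ∈ 𝒬, ∃ R ∈ 𝒬, R₀.toSet ⊆ R.toSet ∧
      ∀ R' ∈ 𝒬, R.toSet ⊆ R'.toSet → R' = R := by
  intro R₀ hR₀
  classical
  set C := 𝒬.filter (fun R => R₀.toSet ⊆ R.toSet) with hC
  have hne : C.Nonempty := ⟨R₀, Finset.mem_filter.mpr ⟨hR₀, subset_refl _⟩⟩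
  obtain ⟨R, hRC, hmax⟩ := Finset.exists_max_image C DyadicCube.n hne
  have hRC' := Finset.mem_filter.mp hRC
  refine ⟨R, hRC'.1, hRC'.2, ?_⟩
  intro R' hR' hsub
  have hR'C : R' ∈ C := Finset.mem_filter.mpr ⟨hR', hRC'.2.trans hsub⟩
  have h1 : R'.n ≤ R.n := hmax R' hR'C
  have h2 : R.n ≤ R'.n := level_le_of_subset hd hsub
  exact (eq_of_subset_of_level_eq hsub (le_antisymm h2 h1)).symm

end WeakProof
namespace WeakProof
open DyadicCube
variable {d : ℕ}

/-- every member of a measure-bounded family of positive-measure cubes inside a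
sparse collection is contained in a maximal member -/
lemma exists_maximal_in (hd : 0 < d) {μ : Measure (Fin d → ℝ)} {𝒮 𝒫₁ : Set (DyadicCube d)}
    (hsp : ∀ S ∈ 𝒮, ∑' S' : sparseChildren 𝒮 S, μ (S' : DyadicCube d).toSet ≤ μ S.toSet / 2)
    (h𝒮 : 𝒫₁ ⊆ 𝒮) (hμ0 : ∀ T ∈ 𝒫₁, μ T.toSet ≠ 0)
    (hμtop : ∀ T : DyadicCube d, μ T.toSet ≠ ⊤)
    {B : ℝ≥0∞} (hB : B ≠ ⊤) (hbound : ∀ T ∈ 𝒫₁, μ T.toSet ≤ B) :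
    ∀ P ∈ 𝒫₁, ∃ M ∈ 𝒫₁, P.toSet ⊆ M.toSet ∧
      ∀ T ∈ 𝒫₁, M.toSet ⊆ T.toSet → T = M := by
  intro P hP
  set K := B * (μ P.toSet)⁻¹ with hK
  have hKtop : K ≠ ⊤ := ENNReal.mul_ne_top hB (by simp [hμ0 P hP])
  obtain ⟨N, hN⟩ := ENNReal.exists_nat_gt (lt_top_iff_ne_top.mpr hKtop).ne
  have hKN : K < (2:ℝ≥0∞) ^ N := by
    refine hN.trans_le ?_
    have h1 : (N:ℕ) ≤ 2 ^ N := (Nat.lt_two_pow_self (n := N)).le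
    calc (N : ℝ≥0∞) ≤ ((2 ^ N : ℕ) : ℝ≥0∞) := by exact_mod_cast h1
      _ = (2:ℝ≥0∞) ^ N := by push_cast; ring
  have hdepN : ∀ T ∈ 𝒫₁, P.toSet ⊆ T.toSet → dep 𝒮 P T < N := by
    intro T hT hPT
    by_contra hge
    push_neg at hge
    have h2 : (2:ℝ≥0∞) ^ N ≤ (2:ℝ≥0∞) ^ (dep 𝒮 P T) :=
      pow_le_pow_right₀ (by norm_num : (1:ℝ≥0∞) ≤ 2) hge
    have hmu : (2:ℝ≥0∞) ^ (dep 𝒮 P T) * μ P.toSet ≤ μ T.toSet :=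
      mu_pow_dep hd hsp (h𝒮 hP) (dep 𝒮 P T) T (h𝒮 hT) hPT rfl
    have h3 : (2:ℝ≥0∞) ^ (dep 𝒮 P T) ≤ K := by
      have hc : (2:ℝ≥0∞) ^ (dep 𝒮 P T) =
          ((2:ℝ≥0∞) ^ (dep 𝒮 P T) * μ P.toSet) * (μ P.toSet)⁻¹ := by
        rw [mul_assoc, ENNReal.mul_inv_cancel (hμ0 P hP) (hμtop P), mul_one]
      rw [hc, hK]
      exact mul_le_mul' (hmu.trans (hbound T hT)) le_rfl
    exact absurd (lt_of_le_of_lt (h2.trans h3) hKN) (lt_irrefl _)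
  -- the candidates above P form a finite set
  set cand := {T : DyadicCube d | T ∈ 𝒫₁ ∧ P.toSet ⊆ T.toSet} with hcand
  have hfin : cand.Finite := by
    have hinj : Set.InjOn (dep 𝒮 P) cand := by
      intro T hT T' hT' hdep
      by_contra hne
      have hint : (T.toSet ∩ T'.toSet).Nonempty :=
        ⟨corner P, hT.2 (corner_mem P), hT'.2 (corner_mem P)⟩
      rcases nested_of_inter hd hint with hsub | hsub
      · have hss : T.toSet ⊂ T'.toSet :=
          ⟨hsub, fun hrev => hne (eq_of_mutual_subset hd hsub hrev)⟩
        have := dep_lt_of_ssubset hd (h𝒮 hT.1) hT.2 hss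
        omega
      · have hss : T'.toSet ⊂ T.toSet :=
          ⟨hsub, fun hrev => hne (eq_of_mutual_subset hd hrev hsub)⟩
        have := dep_lt_of_ssubset hd (h𝒮 hT'.1) hT'.2 hss
        omega
    apply Set.Finite.of_finite_image _ hinj
    apply (Set.finite_Iio N).subset
    rintro _ ⟨T, hT, rfl⟩
    exact hdepN T hT.1 hT.2
  have hne : cand.Nonempty := ⟨P, hP, subset_refl _⟩
  obtain ⟨M, hM, hmax⟩ := hfin.exists_maximal_wrt (dep 𝒮 P) cand hne
  refine ⟨M, hM.1, hM.2, ?_⟩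
  intro T hT hMT
  have hTc : T ∈ cand := ⟨hT, hM.2.trans hMT⟩
  by_contra hne'
  have hss : M.toSet ⊂ T.toSet :=
    ⟨hMT, fun hrev => hne' (eq_of_mutual_subset hd hrev hMT)⟩
  have hlt := dep_lt_of_ssubset hd (h𝒮 hM.1) hM.2 hss
  have := hmax T hTc hlt.le
  omega

/-- maximal members of any family of cubes are pairwise disjoint -/
lemma maximal_pairwise (hd : 0 < d) (𝒫₁ : Set (DyadicCube d)) :
    {M | M ∈ 𝒫₁ ∧ ∀ T ∈ 𝒫₁, M.toSet ⊆ T.toSet → T = M}.PairwiseDisjoint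
      DyadicCube.toSet := by
  intro M hM M' hM' hne
  rw [Function.onFun]
  by_contra hnd
  rw [Set.not_disjoint_iff] at hnd
  rcases nested_of_inter hd (Set.nonempty_def.mpr hnd) with hsub | hsub
  · exact hne (hM.2 M' hM'.1 hsub).symm
  · exact hne (hM'.2 M hM.1 hsub)

end WeakProof
namespace WeakProof
open DyadicCube MeasureTheory
variable {d : ℕ}

lemma Aop_eq (μ : Measure (Fin d → ℝ)) (𝒮 : Set (DyadicCube d)) (k : ℕ)
    (f : (Fin d → ℝ) → ℝ) (x : Fin d → ℝ) :
    Aop μ 𝒮 k f x = ∑' S : 𝒮,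
      wS μ (μ.withDensity fun y => (‖f y‖₊ : ℝ≥0∞)) k (S : DyadicCube d) *
        (S : DyadicCube d).toSet.indicator (fun _ => (1 : ℝ≥0∞)) x := by
  apply tsum_congr
  intro S
  rw [wS, withDensity_apply _ (measurableSet_toSet _)]

lemma cover (hd : 0 < d) {μ : Measure (Fin d → ℝ)} {𝒮 : Set (DyadicCube d)} {k : ℕ}
    {f : (Fin d → ℝ) → ℝ} {τ : ℝ≥0∞} {x : Fin d → ℝ}
    (hx : τ < Aop μ 𝒮 k f x) :
    ∃ P, P ∈ 𝒮 ∧ τ < GP μ (μ.withDensity fun y => (‖f y‖₊ : ℝ≥0∞)) 𝒮 k P ∧ x ∈ P.toSet := by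
  classical
  set ν := μ.withDensity fun y => (‖f y‖₊ : ℝ≥0∞) with hν
  rw [Aop_eq, ENNReal.tsum_eq_iSup_sum] at hx
  obtain ⟨F₀, hF₀⟩ := lt_iSup_iff.mp hx
  set F₁ := F₀.filter (fun S : 𝒮 => x ∈ (S : DyadicCube d).toSet) with hF₁
  have hsum : ∑ S ∈ F₁, wS μ ν k (S : DyadicCube d) *
      (S : DyadicCube d).toSet.indicator (fun _ => (1:ℝ≥0∞)) x
      = ∑ S ∈ F₀, wS μ ν k (S : DyadicCube d) *
      (S : DyadicCube d).toSet.indicator (fun _ => (1:ℝ≥0∞)) x := by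
    apply Finset.sum_subset (Finset.filter_subset _ _)
    intro S hS hnot
    have hxnot : x ∉ (S : DyadicCube d).toSet := by
      intro hmem
      exact hnot (Finset.mem_filter.mpr ⟨hS, hmem⟩)
    rw [Set.indicator_of_notMem hxnot, mul_zero]
  rw [← hsum] at hF₀
  have hsum2 : ∑ S ∈ F₁, wS μ ν k (S : DyadicCube d) *
      (S : DyadicCube d).toSet.indicator (fun _ => (1:ℝ≥0∞)) x
      = ∑ S ∈ F₁, wS μ ν k (S : DyadicCube d) := by
    apply Finset.sum_congr rfl
    intro S hS
    have hxS : x ∈ (S : DyadicCube d).toSet := (Finset.mem_filter.mp hS).2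
    rw [Set.indicator_of_mem hxS, mul_one]
  rw [hsum2] at hF₀
  have hne : F₁.Nonempty := by
    rcases Finset.eq_empty_or_nonempty F₁ with h | h
    · rw [h, Finset.sum_empty] at hF₀
      exact absurd hF₀ (by simp)
    · exact h
  obtain ⟨Pm, hPmF, hmin⟩ := F₁.exists_min_image (fun S => (S : DyadicCube d).n) hne
  have hxPm : x ∈ (Pm : DyadicCube d).toSet := (Finset.mem_filter.mp hPmF).2
  have hsub : ∀ S ∈ F₁, (Pm : DyadicCube d).toSet ⊆ (S : DyadicCube d).toSet := by
    intro S hS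
    exact toSet_subset_of_le ⟨x, hxPm, (Finset.mem_filter.mp hS).2⟩ (hmin S hS)
  refine ⟨(Pm : DyadicCube d), Pm.2, ?_, hxPm⟩
  refine lt_of_lt_of_le hF₀ ?_
  -- finite sum ≤ tsum over the chain above Pm
  have hinj : Function.Injective (fun g : {S : 𝒮 // S ∈ F₁} =>
      (⟨(g : 𝒮), (g : 𝒮).2, hsub g g.2⟩ :
        {S : DyadicCube d // S ∈ 𝒮 ∧ (Pm : DyadicCube d).toSet ⊆ S.toSet})) := by
    intro a b hab
    have h2 : ((a : 𝒮) : DyadicCube d) = ((b : 𝒮) : DyadicCube d) := by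
      have := congrArg (fun z : {S : DyadicCube d // S ∈ 𝒮 ∧ (Pm : DyadicCube d).toSet ⊆ S.toSet}
        => (z : DyadicCube d)) hab
      simpa using this
    exact Subtype.ext (Subtype.ext h2)
  have h1 : ∑ S ∈ F₁, wS μ ν k (S : DyadicCube d)
      = ∑ g ∈ F₁.attach, wS μ ν k ((g : 𝒮) : DyadicCube d) :=
    (Finset.sum_attach F₁ (fun S => wS μ ν k (S : DyadicCube d))).symm
  rw [h1]
  have h3 : ∑ g ∈ F₁.attach, wS μ ν k ((g : 𝒮) : DyadicCube d)
      = ∑ C ∈ F₁.attach.map ⟨_, hinj⟩, wS μ ν k (C : DyadicCube d) := by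
    rw [Finset.sum_map]
    rfl
  rw [h3]
  exact ENNReal.sum_le_tsum _

end WeakProof
namespace WeakProof
open DyadicCube MeasureTheory
variable {d : ℕ}

lemma two_inv_mul_r34_inv : (2:ℝ≥0∞)⁻¹ * ((3:ℝ≥0∞) * 4⁻¹)⁻¹ = 2 * 3⁻¹ := by
  rw [ENNReal.mul_inv (Or.inl three_ne_zero') (Or.inl three_ne_top'), inv_inv]
  calc (2:ℝ≥0∞)⁻¹ * (3⁻¹ * 4) = 3⁻¹ * (2⁻¹ * 4) := by ring
    _ = 3⁻¹ * 2 := by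
        congr 1
        have h4 : (4:ℝ≥0∞) = 2 * 2 := by norm_num
        rw [h4, ← mul_assoc, ENNReal.inv_mul_cancel two_ne_zero ENNReal.ofNat_ne_top, one_mul]
    _ = 2 * 3⁻¹ := by ring

lemma one_sub_rho : (1:ℝ≥0∞) - 2 * 3⁻¹ = 3⁻¹ := by
  apply ENNReal.sub_eq_of_eq_add
  · exact ENNReal.mul_ne_top ENNReal.ofNat_ne_top (by simp [three_ne_zero'])
  · have h : (3:ℝ≥0∞) * 3⁻¹ = 3⁻¹ + 2 * 3⁻¹ := by
      have h3 : (3:ℝ≥0∞) = 1 + 2 := by norm_num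
      rw [h3, add_mul, one_mul]
    rw [← ENNReal.mul_inv_cancel three_ne_zero' three_ne_top', h]

lemma sfun_inv {τ : ℝ≥0∞} (i : ℕ) :
    (sfun τ i)⁻¹ = 4 * (((3:ℝ≥0∞) * 4⁻¹)⁻¹) ^ i * τ⁻¹ := by
  rw [sfun, ENNReal.mul_inv (Or.inl (mul_ne_zero (by simp [four_ne_top'])
      (pow_ne_zero i r34_ne_zero)))
    (Or.inl (ENNReal.mul_ne_top (by simp [four_ne_zero']) (ENNReal.pow_ne_top r34_ne_top))),
    ENNReal.mul_inv (Or.inl (by simp [four_ne_top'])) (Or.inl (by simp [four_ne_zero'])),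
    inv_inv, ← ENNReal.inv_pow]

lemma tsum_weights {τ : ℝ≥0∞} :
    ∑' i : ℕ, (2:ℝ≥0∞)⁻¹ ^ i * (sfun τ i)⁻¹ = 12 * τ⁻¹ := by
  have hterm : ∀ i : ℕ, (2:ℝ≥0∞)⁻¹ ^ i * (sfun τ i)⁻¹
      = (4 * τ⁻¹) * ((2:ℝ≥0∞) * 3⁻¹) ^ i := by
    intro i
    rw [sfun_inv, ← two_inv_mul_r34_inv, mul_pow]
    ring
  calc ∑' i : ℕ, (2:ℝ≥0∞)⁻¹ ^ i * (sfun τ i)⁻¹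
      = ∑' i : ℕ, (4 * τ⁻¹) * ((2:ℝ≥0∞) * 3⁻¹) ^ i := tsum_congr hterm
    _ = (4 * τ⁻¹) * ∑' i : ℕ, ((2:ℝ≥0∞) * 3⁻¹) ^ i := ENNReal.tsum_mul_left
    _ = (4 * τ⁻¹) * 3 := by rw [ENNReal.tsum_geometric, one_sub_rho, inv_inv]
    _ = 12 * τ⁻¹ := by
        have : (4:ℝ≥0∞) * 3 = 12 := by norm_num
        calc (4 * τ⁻¹) * 3 = (4 * 3) * τ⁻¹ := by ring
          _ = 12 * τ⁻¹ := by rw [this]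

/-- the central counting estimate over any finite subfamily of maximal cubes -/
lemma finset_bound (hd : 0 < d) {μ ν : Measure (Fin d → ℝ)} {𝒮 : Set (DyadicCube d)} {k : ℕ}
    {τ : ℝ≥0∞}
    (hsp : ∀ S ∈ 𝒮, ∑' S' : sparseChildren 𝒮 S, μ (S' : DyadicCube d).toSet ≤ μ S.toSet / 2)
    (hτ0 : τ ≠ 0) (hτtop : τ ≠ ⊤)
    (hμtop : ∀ T : DyadicCube d, μ T.toSet ≠ ⊤)
    (habs : ∀ A : Set (Fin d → ℝ), μ A = 0 → ν A = 0)
    {Mx : Set (DyadicCube d)} (hMax𝒮 : Mx ⊆ 𝒮)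
    (hMaxG : ∀ P ∈ Mx, τ < GP μ ν 𝒮 k P)
    (hMaxdisj : Mx.PairwiseDisjoint DyadicCube.toSet)
    (F' : Finset (DyadicCube d)) (hF' : ∀ P ∈ F', P ∈ Mx) :
    ∑ P ∈ F', μ P.toSet ≤ 12 * τ⁻¹ * ν Set.univ := by
  classical
  have hpig : ∀ P ∈ F', ∃ S, S ∈ 𝒮 ∧ P.toSet ⊆ S.toSet ∧
      sfun τ (dep 𝒮 P S) < wS μ ν k S :=
    fun P hP => pigeonhole hd (hMaxG P (hF' P hP))
  choose! sel hsel𝒮 hselsub hselw using hpig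
  set iF := fun P => dep 𝒮 P (sel P) with hiF
  set qF := fun P => DyadicCube.ancestor k (sel P) with hqF
  rw [← Finset.sum_fiberwise_of_maps_to (g := iF) (t := F'.image iF)
    (fun P hP => Finset.mem_image_of_mem iF hP) (fun P => μ P.toSet)]
  have hfiber : ∀ i ∈ F'.image iF,
      ∑ P ∈ F'.filter (fun P => iF P = i), μ P.toSet ≤
        (2:ℝ≥0∞)⁻¹ ^ i * (sfun τ i)⁻¹ * ν Set.univ := by
    intro i hi
    set Fi := F'.filter (fun P => iF P = i) with hFi
    set 𝒬 := Fi.image qF with h𝒬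
    have hcov : ∀ P ∈ Fi, ∃ R ∈ 𝒬, (qF P).toSet ⊆ R.toSet ∧
        ∀ R' ∈ 𝒬, R.toSet ⊆ R'.toSet → R' = R :=
      fun P hP => finset_max_cover hd 𝒬 (qF P) (Finset.mem_image_of_mem qF hP)
    choose! Rf hRf𝒬 hRfsub hRfmax using hcov
    rw [← Finset.sum_fiberwise_of_maps_to (g := Rf) (t := Fi.image Rf)
      (fun P hP => Finset.mem_image_of_mem Rf hP) (fun P => μ P.toSet)]
    have hRbound : ∀ R ∈ Fi.image Rf,
        ∑ P ∈ Fi.filter (fun P => Rf P = R), μ P.toSet ≤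
          (2:ℝ≥0∞)⁻¹ ^ i * ((sfun τ i)⁻¹ * ν R.toSet) := by
      intro R hR
      -- decay bound
      have hdecay : ∑ P ∈ Fi.filter (fun P => Rf P = R), μ P.toSet ≤
          (2:ℝ≥0∞)⁻¹ ^ i * μ R.toSet := by
        apply decay hd hsp
        · intro P hP
          have hPFi : P ∈ Fi := (Finset.mem_filter.mp hP).1
          have hPF' : P ∈ F' := (Finset.mem_filter.mp hPFi).1
          have hieq : iF P = i := (Finset.mem_filter.mp hPFi).2
          have hReq : Rf P = R := (Finset.mem_filter.mp hP).2
          have hHC : HC 𝒮 (iF P) P (sel P).toSet :=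
            HC_of_dep hd (iF P) P (sel P) (hMax𝒮 (hF' P hPF')) (hsel𝒮 P hPF')
              (hselsub P hPF') rfl
          have hmono : (sel P).toSet ⊆ R.toSet := by
            have h1 : (sel P).toSet ⊆ (qF P).toSet := subset_ancestor k (sel P)
            have h2 : (qF P).toSet ⊆ (Rf P).toSet := hRfsub P hPFi
            rw [hReq] at h2
            exact h1.trans h2
          rw [← hieq]
          exact HC_mono hHC hmono
        · apply hMaxdisj.subset
          intro P hP
          exact hF' P (Finset.mem_filter.mp (Finset.mem_filter.mp hP).1).1
      -- measure of R bounded by its ν-mass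
      have hR𝒬 : R ∈ 𝒬 := by
        obtain ⟨Pa, hPa, rfl⟩ := Finset.mem_image.mp hR
        exact hRf𝒬 Pa hPa
      have hmuR : μ R.toSet ≤ (sfun τ i)⁻¹ * ν R.toSet := by
        obtain ⟨P₂, hP₂, hqeq⟩ := Finset.mem_image.mp hR𝒬
        have hP₂F' : P₂ ∈ F' := (Finset.mem_filter.mp hP₂).1
        have hieq : iF P₂ = i := (Finset.mem_filter.mp hP₂).2
        have hw : sfun τ i < ν R.toSet / μ R.toSet := by
          have := hselw P₂ hP₂F'
          rw [show dep 𝒮 P₂ (sel P₂) = iF P₂ from rfl, hieq] at this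
          rw [wS] at this
          rw [show DyadicCube.ancestor k (sel P₂) = qF P₂ from rfl, hqeq] at this
          exact this
        rcases eq_or_ne (μ R.toSet) 0 with h0 | h0
        · rw [h0]
          exact zero_le
        · have hstep : sfun τ i * μ R.toSet ≤ ν R.toSet := by
            have h1 := mul_le_mul_left hw.le (μ R.toSet)
            rwa [ENNReal.div_mul_cancel h0 (hμtop R)] at h1
          calc μ R.toSet = (sfun τ i)⁻¹ * (sfun τ i * μ R.toSet) := by
                rw [← mul_assoc, ENNReal.inv_mul_cancel (sfun_ne_zero hτ0 i)
                  (sfun_ne_top hτtop i), one_mul]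
            _ ≤ (sfun τ i)⁻¹ * ν R.toSet :=
                mul_le_mul' le_rfl hstep
      calc ∑ P ∈ Fi.filter (fun P => Rf P = R), μ P.toSet
          ≤ (2:ℝ≥0∞)⁻¹ ^ i * μ R.toSet := hdecay
        _ ≤ (2:ℝ≥0∞)⁻¹ ^ i * ((sfun τ i)⁻¹ * ν R.toSet) := mul_le_mul' le_rfl hmuR
    -- sum the fiber bounds over the (disjoint) maximal ancestors
    have hRdisj : ((Fi.image Rf : Set (DyadicCube d))).PairwiseDisjoint DyadicCube.toSet := by
      intro a ha b hb hab
      simp only [Finset.coe_image, Set.mem_image, Finset.mem_coe] at ha hb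
      obtain ⟨Pa, hPa, rfl⟩ := ha
      obtain ⟨Pb, hPb, rfl⟩ := hb
      rw [Function.onFun]
      by_contra hnd
      rw [Set.not_disjoint_iff] at hnd
      rcases nested_of_inter hd (Set.nonempty_def.mpr hnd) with hsub | hsub
      · exact hab (hRfmax Pa hPa (Rf Pb) (hRf𝒬 Pb hPb) hsub).symm
      · exact hab (hRfmax Pb hPb (Rf Pa) (hRf𝒬 Pa hPa) hsub)
    calc ∑ R ∈ Fi.image Rf, ∑ P ∈ Fi.filter (fun P => Rf P = R), μ P.toSet
        ≤ ∑ R ∈ Fi.image Rf, (2:ℝ≥0∞)⁻¹ ^ i * ((sfun τ i)⁻¹ * ν R.toSet) :=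
          Finset.sum_le_sum hRbound
      _ = (2:ℝ≥0∞)⁻¹ ^ i * (sfun τ i)⁻¹ * ∑ R ∈ Fi.image Rf, ν R.toSet := by
          rw [Finset.mul_sum]
          apply Finset.sum_congr rfl
          intro R _
          ring
      _ ≤ (2:ℝ≥0∞)⁻¹ ^ i * (sfun τ i)⁻¹ * ν Set.univ := by
          apply mul_le_mul' le_rfl
          have hsum : ∑ R ∈ Fi.image Rf, ν R.toSet = ν (⋃ R ∈ Fi.image Rf, R.toSet) :=
            (measure_biUnion_finset hRdisj (fun R _ => measurableSet_toSet R)).symm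
          rw [hsum]
          exact measure_mono (Set.subset_univ _)
      _ = (2:ℝ≥0∞)⁻¹ ^ i * ((sfun τ i)⁻¹ * ν Set.univ) := by ring
      _ = (2:ℝ≥0∞)⁻¹ ^ i * (sfun τ i)⁻¹ * ν Set.univ := by ring
  calc ∑ i ∈ F'.image iF, ∑ P ∈ F'.filter (fun P => iF P = i), μ P.toSet
      ≤ ∑ i ∈ F'.image iF, (2:ℝ≥0∞)⁻¹ ^ i * (sfun τ i)⁻¹ * ν Set.univ :=
        Finset.sum_le_sum hfiber
    _ ≤ ∑' i : ℕ, (2:ℝ≥0∞)⁻¹ ^ i * (sfun τ i)⁻¹ * ν Set.univ := ENNReal.sum_le_tsum _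
    _ = (∑' i : ℕ, (2:ℝ≥0∞)⁻¹ ^ i * (sfun τ i)⁻¹) * ν Set.univ := ENNReal.tsum_mul_right
    _ = 12 * τ⁻¹ * ν Set.univ := by rw [tsum_weights]

end WeakProof

/-- weak (1,1) bound for positive dyadic operators of complexity `k`,
with constant independent of `k` and `μ`. -/
theorem weak_one_one_positive_dyadic :
    ∃ C : ℝ≥0∞, C ≠ ⊤ ∧ 0 < C ∧
      ∀ (d : ℕ) (k : ℕ) (μ : Measure (Fin d → ℝ)), IsLocallyFiniteMeasure μ →
        (∀ s : Fin d → Bool,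
          μ {x : Fin d → ℝ | ∀ i, if s i then 0 ≤ x i else x i < 0} = ⊤) →
      ∀ (𝒮 : Set (DyadicCube d)),
        (∀ S ∈ 𝒮, ∑' S' : sparseChildren 𝒮 S, μ (S' : DyadicCube d).toSet ≤
          μ S.toSet / 2) →
      ∀ (f : (Fin d → ℝ) → ℝ), Integrable f μ →
      ∀ t : ℝ, 0 < t →
        ENNReal.ofReal t * μ {x | ENNReal.ofReal t < Aop μ 𝒮 k f x} ≤
          C * ∫⁻ y, ‖f y‖₊ ∂μ := by
  classical
  refine ⟨12, by norm_num, by norm_num, ?_⟩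
  intro d k μ hloc hquad 𝒮 hsp f hf t ht
  rcases Nat.eq_zero_or_pos d with rfl | hd
  · -- dimension 0: the hypotheses are contradictory
    exfalso
    haveI : Subsingleton (Fin 0 → ℝ) := ⟨fun a b => funext fun i => i.elim0⟩
    have huniv : {x : Fin 0 → ℝ | ∀ i, if (fun _ : Fin 0 => true) i then 0 ≤ x i else x i < 0}
        = Set.univ := by
      ext x
      simp only [Set.mem_setOf_eq, Set.mem_univ, iff_true]
      intro i
      exact i.elim0
    have htop : μ Set.univ = ⊤ := by rw [← huniv]; exact hquad (fun _ => true)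
    obtain ⟨s, hs, hμs⟩ := hloc.finiteAtNhds (fun i : Fin 0 => (0:ℝ))
    have hseq : s = Set.univ := by
      apply Set.eq_univ_of_forall
      intro y
      have hx : (fun i : Fin 0 => (0:ℝ)) ∈ s := mem_of_mem_nhds hs
      rwa [Subsingleton.elim y (fun i : Fin 0 => (0:ℝ))]
    rw [hseq, htop] at hμs
    exact lt_irrefl _ hμs
  · haveI := hloc
    set τ := ENNReal.ofReal t with hτ
    have hτ0 : τ ≠ 0 := by
      simp only [hτ, ne_eq, ENNReal.ofReal_eq_zero, not_le]
      exact ht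
    have hτtop : τ ≠ ⊤ := ENNReal.ofReal_ne_top
    set ν := μ.withDensity (fun y => (‖f y‖₊ : ℝ≥0∞)) with hν
    have hI : ν Set.univ = ∫⁻ y, ‖f y‖₊ ∂μ := by
      rw [hν, withDensity_apply _ MeasurableSet.univ, Measure.restrict_univ]
    have hItop : ν Set.univ ≠ ⊤ := by
      rw [hI]
      exact hf.2.ne
    have hμtop : ∀ T : DyadicCube d, μ T.toSet ≠ ⊤ :=
      fun T => WeakProof.measure_toSet_ne_top μ T
    have habs : ∀ A : Set (Fin d → ℝ), μ A = 0 → ν A = 0 :=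
      fun A hA => (MeasureTheory.withDensity_absolutelyContinuous μ _) hA
    -- the families of cubes
    set 𝒫₁ : Set (DyadicCube d) :=
      {P | (P ∈ 𝒮 ∧ τ < WeakProof.GP μ ν 𝒮 k P) ∧ μ P.toSet ≠ 0} with h𝒫₁
    set Mx : Set (DyadicCube d) :=
      {M | M ∈ 𝒫₁ ∧ ∀ T ∈ 𝒫₁, M.toSet ⊆ T.toSet → T = M} with hMx
    set 𝒫₀ : Set (DyadicCube d) :=
      {P | (P ∈ 𝒮 ∧ τ < WeakProof.GP μ ν 𝒮 k P) ∧ μ P.toSet = 0} with h𝒫₀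
    have h𝒫₁𝒮 : 𝒫₁ ⊆ 𝒮 := fun T hT => hT.1.1
    have hμ0 : ∀ T ∈ 𝒫₁, μ T.toSet ≠ 0 := fun T hT => hT.2
    have hBtop : (2 * ν Set.univ * τ⁻¹ : ℝ≥0∞) ≠ ⊤ :=
      ENNReal.mul_ne_top (ENNReal.mul_ne_top ENNReal.ofNat_ne_top hItop)
        (ENNReal.inv_ne_top.mpr hτ0)
    have hbound : ∀ T ∈ 𝒫₁, μ T.toSet ≤ 2 * ν Set.univ * τ⁻¹ := by
      intro T hT
      have hGP : τ < 2 * (ν Set.univ * (μ T.toSet)⁻¹) :=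
        lt_of_lt_of_le hT.1.2 (WeakProof.GP_le hd hsp hT.1.1)
      have h1 : τ * μ T.toSet ≤ 2 * ν Set.univ := by
        have h2 := mul_le_mul_left hGP.le (μ T.toSet)
        calc τ * μ T.toSet ≤ 2 * (ν Set.univ * (μ T.toSet)⁻¹) * μ T.toSet := h2
          _ = 2 * ν Set.univ * ((μ T.toSet)⁻¹ * μ T.toSet) := by ring
          _ = 2 * ν Set.univ := by
              rw [ENNReal.inv_mul_cancel (hT.2) (hμtop T), mul_one]
      calc μ T.toSet = τ⁻¹ * (τ * μ T.toSet) := by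
            rw [← mul_assoc, ENNReal.inv_mul_cancel hτ0 hτtop, one_mul]
        _ ≤ τ⁻¹ * (2 * ν Set.univ) := mul_le_mul' le_rfl h1
        _ = 2 * ν Set.univ * τ⁻¹ := by ring
    -- covering of the superlevel set
    have hcov : {x | τ < Aop μ 𝒮 k f x} ⊆
        (⋃ P ∈ 𝒫₀, DyadicCube.toSet P) ∪ (⋃ M ∈ Mx, DyadicCube.toSet M) := by
      intro x hx
      obtain ⟨P, hP𝒮, hPG, hxP⟩ := WeakProof.cover hd hx
      rcases eq_or_ne (μ P.toSet) 0 with h0 | h0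
      · exact Or.inl (Set.mem_biUnion (show P ∈ 𝒫₀ from ⟨⟨hP𝒮, hPG⟩, h0⟩) hxP)
      · have hP1 : P ∈ 𝒫₁ := ⟨⟨hP𝒮, hPG⟩, h0⟩
        obtain ⟨M, hM1, hPM, hmax⟩ := WeakProof.exists_maximal_in hd hsp h𝒫₁𝒮 hμ0 hμtop
          hBtop hbound P hP1
        exact Or.inr (Set.mem_biUnion (show M ∈ Mx from ⟨hM1, hmax⟩) (hPM hxP))
    -- measure estimates
    haveI : Countable (↥𝒫₀) := (Set.to_countable 𝒫₀).to_subtype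
    haveI : Countable (↥Mx) := (Set.to_countable Mx).to_subtype
    have hnull : μ (⋃ P ∈ 𝒫₀, DyadicCube.toSet P) = 0 := by
      rw [Set.biUnion_eq_iUnion]
      refine le_antisymm (le_trans (measure_iUnion_le _) ?_) (zero_le)
      exact le_of_eq (ENNReal.tsum_eq_zero.mpr (fun P => P.2.2))
    have hMxmeas : μ (⋃ M ∈ Mx, DyadicCube.toSet M) ≤ 12 * τ⁻¹ * ν Set.univ := by
      rw [Set.biUnion_eq_iUnion]
      refine le_trans (measure_iUnion_le _) ?_
      rw [ENNReal.tsum_eq_iSup_sum]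
      refine iSup_le ?_
      intro F
      have hval : ∑ g ∈ F, μ (g : DyadicCube d).toSet
          = ∑ P ∈ F.image (fun g : ↥Mx => (g : DyadicCube d)), μ P.toSet := by
        rw [Finset.sum_image]
        intro a _ b _ hab
        exact Subtype.ext hab
      rw [hval]
      refine WeakProof.finset_bound (Mx := Mx) hd hsp hτ0 hτtop hμtop habs
        (fun M hM => hM.1.1.1) (fun M hM => hM.1.1.2)
        (by exact WeakProof.maximal_pairwise hd 𝒫₁)
        _ ?_
      intro P hP
      obtain ⟨g, _, rfl⟩ := Finset.mem_image.mp hP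
      exact g.2
    have hE : μ {x | τ < Aop μ 𝒮 k f x} ≤ 12 * τ⁻¹ * ν Set.univ := by
      refine le_trans (measure_mono hcov) ?_
      refine le_trans (measure_union_le _ _) ?_
      rw [hnull, zero_add]
      exact hMxmeas
    calc ENNReal.ofReal t * μ {x | ENNReal.ofReal t < Aop μ 𝒮 k f x}
        ≤ τ * (12 * τ⁻¹ * ν Set.univ) := mul_le_mul' le_rfl hE
      _ = 12 * ν Set.univ * (τ * τ⁻¹) := by ring
      _ = 12 * ν Set.univ := by
          rw [ENNReal.mul_inv_cancel hτ0 hτtop, mul_one]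
      _ = 12 * ∫⁻ y, ‖f y‖₊ ∂μ := by rw [hI]
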